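/- Let G = (L, R, E) be a bipartite graph with finite vertex sets L and R and edge set E ⊆ L × R, let p : R → ℝ with p(v) ≥ 0, and let f_{G,p} : Finset L → ℝ be the coverage function f_{G,p}(S) = Σ_{v ∈ N(S)} p(v), where N(S) = { v ∈ R : ∃ u ∈ S, (u,v) ∈ E }. Then the extension by expectation F of f_{G,p} has the closed form: for every y ∈ [0,1]^L, F(y) = Σ_{v ∈ R} p(v) · ( 1 − Π_{u ∈ N(v)} (1 − y_u) ), where N(v) = { u ∈ L : (u,v) ∈ E }. -/
import Mathlib


open scoped Classical

/-- The extension by expectation (multilinear extension) of a set function. -/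
noncomputable def mulExt {L : Type*} [Fintype L] [DecidableEq L]
    (f : Finset L → ℝ) (y : L → ℝ) : ℝ :=
  ∑ S : Finset L, f S * ((∏ u ∈ S, y u) * ∏ u ∈ Sᶜ, (1 - y u))

/-- The weighted coverage function of a bipartite graph `G = (L, R, E)`:
`coverFn E p S` is the total profit of the vertices of `R` that have a
neighbor in `S`. -/
noncomputable def coverFn {L R : Type*} [Fintype R]
    (E : Finset (L × R)) (p : R → ℝ) (S : Finset L) : ℝ :=
  ∑ v ∈ Finset.univ.filter (fun v : R => ∃ u ∈ S, (u, v) ∈ E), p v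

open Finset in
lemma sum_w {L : Type*} [Fintype L] [DecidableEq L] (y : L → ℝ) (A : Finset L) :
    ∑ S ∈ Aᶜ.powerset, (∏ u ∈ S, y u) * ∏ u ∈ Sᶜ, (1 - y u) = ∏ u ∈ A, (1 - y u) := by
  have h : ∀ S ∈ Aᶜ.powerset, (∏ u ∈ S, y u) * ∏ u ∈ Sᶜ, (1 - y u)
      = (∏ u ∈ A, (1 - y u)) * ((∏ u ∈ S, y u) * ∏ u ∈ Aᶜ \ S, (1 - y u)) := by
    intro S hS
    rw [mem_powerset] at hS
    have hc : Sᶜ = A ∪ (Aᶜ \ S) := by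
      ext x
      have hS' : x ∈ S → x ∉ A := fun h => mem_compl.mp (hS h)
      simp only [mem_compl, mem_union, mem_sdiff]
      tauto
    rw [hc, Finset.prod_union (disjoint_compl_right.mono_right Finset.sdiff_subset)]
    ring
  rw [Finset.sum_congr rfl h, ← Finset.mul_sum, ← Finset.prod_add]
  simp

theorem mulExt_coverFn_closed_form
    {L R : Type*} [Fintype L] [Fintype R] [DecidableEq L] [DecidableEq R]
    (E : Finset (L × R)) (p : R → ℝ) (hp : ∀ v, 0 ≤ p v)
    (y : L → ℝ) (hy : ∀ u, 0 ≤ y u ∧ y u ≤ 1) :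
    mulExt (coverFn E p) y =
      ∑ v : R, p v *
        (1 - ∏ u ∈ Finset.univ.filter (fun u : L => (u, v) ∈ E), (1 - y u)) := by
  classical
  unfold mulExt coverFn
  simp only [Finset.sum_mul, Finset.sum_filter]
  rw [Finset.sum_comm]
  refine Finset.sum_congr rfl fun v _ => ?_
  set A := Finset.univ.filter (fun u : L => (u, v) ∈ E) with hA
  simp only [ite_mul, zero_mul, ← Finset.sum_filter]
  rw [← Finset.mul_sum]
  congr 1
  have hset : Finset.univ.filter (fun S : Finset L => ¬ ∃ u ∈ S, (u, v) ∈ E)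
      = Aᶜ.powerset := by
    ext S
    simp only [Finset.mem_filter, Finset.mem_univ, true_and, Finset.mem_powerset, hA,
      Finset.subset_iff, Finset.mem_compl, Finset.mem_filter, not_exists, not_and]
  have hadd := Finset.sum_filter_add_sum_filter_not Finset.univ
      (fun S : Finset L => ∃ u ∈ S, (u, v) ∈ E)
      (fun S => (∏ u ∈ S, y u) * ∏ u ∈ Sᶜ, (1 - y u))
  have h1 : ∑ S : Finset L, (∏ u ∈ S, y u) * ∏ u ∈ Sᶜ, (1 - y u) = 1 := by
    rw [show (Finset.univ : Finset (Finset L)) = (∅ : Finset L)ᶜ.powerset by simp, sum_w]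
    simp
  rw [hset, sum_w, h1] at hadd
  linarith
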